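/- Let V be a finite-dimensional real inner product space with three linear isometries I, J, K : V → V satisfying I² = J² = K² = -id and I∘J = K. Let G ⊆ T be subspaces of V such that A(G) ⊆ T^⊥ for each A ∈ {I, J, K}, and assume dim V = dim T + 3·dim G. Then T^⊥ = I(G) ⊕ J(G) ⊕ K(G), an internal direct sum of pairwise orthogonal subspaces. -/
import Mathlib


open Submodule RealInnerProductSpace FiniteDimensional

/-- If moreover `dim V = dim T + 3 dim G`, then `Tᗮ = I(G) ⊕ J(G) ⊕ K(G)`, an internal
direct sum of pairwise orthogonal subspaces. -/
theorem orthogonal_eq_IG_JG_KG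
    (V : Type*) [NormedAddCommGroup V] [InnerProductSpace ℝ V] [FiniteDimensional ℝ V]
    (I J K : V →ₗᵢ[ℝ] V)
    (hI : ∀ v : V, I (I v) = -v) (hJ : ∀ v : V, J (J v) = -v)
    (hK : ∀ v : V, K (K v) = -v) (hIJ : ∀ v : V, I (J v) = K v)
    (G T : Submodule ℝ V) (hGT : G ≤ T)
    (hIG : ∀ g ∈ G, I g ∈ Tᗮ) (hJG : ∀ g ∈ G, J g ∈ Tᗮ) (hKG : ∀ g ∈ G, K g ∈ Tᗮ)
    (hdim : Module.finrank ℝ V = Module.finrank ℝ T + 3 * Module.finrank ℝ G) :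
    Tᗮ = G.map I.toLinearMap ⊔ G.map J.toLinearMap ⊔ G.map K.toLinearMap ∧
    (∀ x ∈ G.map I.toLinearMap, ∀ y ∈ G.map J.toLinearMap, ⟪x, y⟫ = 0) ∧
    (∀ x ∈ G.map J.toLinearMap, ∀ y ∈ G.map K.toLinearMap, ⟪x, y⟫ = 0) ∧
    (∀ x ∈ G.map I.toLinearMap, ∀ y ∈ G.map K.toLinearMap, ⟪x, y⟫ = 0) := by
  -- derived quaternion identities
  have hJIJ : ∀ v : V, J (I (J v)) = I v := by
    intro v
    have h1 : I (J (I (J v))) = -v := by rw [hIJ (I (J v)), hIJ v, hK]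
    have h2 : I (I (J (I (J v)))) = I (-v) := by rw [h1]
    rw [hI, map_neg] at h2
    exact neg_injective h2
  have hJI : ∀ v : V, J (I v) = -K v := by
    intro v
    have := hJIJ (J v)
    rw [hJ v, map_neg, map_neg, hIJ] at this
    exact neg_injective (by rw [neg_neg, this])
  have hJK : ∀ v : V, J (K v) = I v := by
    intro v
    rw [← hIJ v, hJI (J v), ← hIJ (J v), hJ, map_neg, neg_neg]
  have hIK : ∀ v : V, I (K v) = -J v := by
    intro v
    rw [← hIJ v, hI]
  -- orthogonality statements
  have oIJ : ∀ x ∈ G.map I.toLinearMap, ∀ y ∈ G.map J.toLinearMap, ⟪x, y⟫ = 0 := by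
    rintro x ⟨g, hg, rfl⟩ y ⟨g', hg', rfl⟩
    have : ⟪I (I g), I (J g')⟫ = 0 := by
      rw [hI, hIJ, inner_neg_left]
      have := (Submodule.mem_orthogonal T (K g')).mp (hKG g' hg') g (hGT hg)
      rw [this, neg_zero]
    rwa [I.inner_map_map] at this
  have oJK : ∀ x ∈ G.map J.toLinearMap, ∀ y ∈ G.map K.toLinearMap, ⟪x, y⟫ = 0 := by
    rintro x ⟨g, hg, rfl⟩ y ⟨g', hg', rfl⟩
    have : ⟪J (J g), J (K g')⟫ = 0 := by
      rw [hJ, hJK, inner_neg_left]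
      have := (Submodule.mem_orthogonal T (I g')).mp (hIG g' hg') g (hGT hg)
      rw [this, neg_zero]
    rwa [J.inner_map_map] at this
  have oIK : ∀ x ∈ G.map I.toLinearMap, ∀ y ∈ G.map K.toLinearMap, ⟪x, y⟫ = 0 := by
    rintro x ⟨g, hg, rfl⟩ y ⟨g', hg', rfl⟩
    have : ⟪I (I g), I (K g')⟫ = 0 := by
      rw [hI, hIK, inner_neg_left, inner_neg_right, neg_neg]
      exact (Submodule.mem_orthogonal T (J g')).mp (hJG g' hg') g (hGT hg)
    rwa [I.inner_map_map] at this
  -- the subspace equality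
  refine ⟨?_, oIJ, oJK, oIK⟩
  set S := G.map I.toLinearMap ⊔ G.map J.toLinearMap ⊔ G.map K.toLinearMap with hS
  have hSle : S ≤ Tᗮ := by
    refine sup_le (sup_le ?_ ?_) ?_ <;> rw [Submodule.map_le_iff_le_comap] <;>
      intro g hg
    · exact hIG g hg
    · exact hJG g hg
    · exact hKG g hg
  -- dimensions
  have hrI : Module.finrank ℝ (G.map I.toLinearMap) = Module.finrank ℝ G :=
    (Submodule.equivMapOfInjective I.toLinearMap I.injective G).finrank_eq.symm
  have hrJ : Module.finrank ℝ (G.map J.toLinearMap) = Module.finrank ℝ G :=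
    (Submodule.equivMapOfInjective J.toLinearMap J.injective G).finrank_eq.symm
  have hrK : Module.finrank ℝ (G.map K.toLinearMap) = Module.finrank ℝ G :=
    (Submodule.equivMapOfInjective K.toLinearMap K.injective G).finrank_eq.symm
  have disj : ∀ p q : Submodule ℝ V, (∀ x ∈ p, ∀ y ∈ q, ⟪x, y⟫ = 0) → p ⊓ q = ⊥ := by
    intro p q h
    rw [Submodule.eq_bot_iff]
    rintro x ⟨hxp, hxq⟩
    exact inner_self_eq_zero.mp (h x hxp x hxq)
  have hIJsup : Module.finrank ℝ ((G.map I.toLinearMap ⊔ G.map J.toLinearMap) : Submodule ℝ V)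
      = 2 * Module.finrank ℝ G := by
    have := Submodule.finrank_sup_add_finrank_inf_eq (G.map I.toLinearMap) (G.map J.toLinearMap)
    rw [disj _ _ oIJ, finrank_bot, hrI, hrJ] at this
    omega
  have oSK : ∀ x ∈ (G.map I.toLinearMap ⊔ G.map J.toLinearMap : Submodule ℝ V),
      ∀ y ∈ G.map K.toLinearMap, ⟪x, y⟫ = 0 := by
    intro x hx y hy
    obtain ⟨a, ha, b, hb, rfl⟩ := Submodule.mem_sup.mp hx
    rw [inner_add_left, oIK a ha y hy, oJK b hb y hy, add_zero]
  have hSrank : Module.finrank ℝ S = 3 * Module.finrank ℝ G := by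
    have := Submodule.finrank_sup_add_finrank_inf_eq
      (G.map I.toLinearMap ⊔ G.map J.toLinearMap) (G.map K.toLinearMap)
    rw [disj _ _ oSK, finrank_bot, hIJsup, hrK] at this
    rw [hS]
    omega
  have hTrank : Module.finrank ℝ (Tᗮ) = 3 * Module.finrank ℝ G := by
    have := Submodule.finrank_add_finrank_orthogonal (K := T)
    omega
  exact (Submodule.eq_of_le_of_finrank_le hSle (by omega)).symm
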